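/- Let Ω ⊆ ℝ³ be a measurable set, T > 0, and let p' ∈ (2, ∞), q' ∈ (2, 6) satisfy 3/q' + 2/p' = 3/2. Let u : ℝ → ℝ³ → ℝ³ be measurable with M_∞ := esssup_{t ∈ (0,T)} ‖u t‖_{L²(Ω)} < ∞ and M₆ := (∫₀ᵀ ‖u t‖_{L⁶(Ω)}² dt)^{1/2} < ∞. Then (∫₀ᵀ ‖u t‖_{L^{q'}(Ω)}^{p'} dt)^{1/p'} ≤ M_∞ + M₆. -/

import Mathlib

open MeasureTheory ENNReal

/-- interpolation for lintegrals: `‖g‖_{q₀} ≤ ‖g‖_2^θ * ‖g‖_6^{1-θ}`. -/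
lemma lintegral_interp {α : Type*} [MeasurableSpace α] (μ : Measure α) (g : α → ℝ≥0∞)
    (hg : AEMeasurable g μ) {θ q0 : ℝ} (hθ0 : 0 < θ) (hθ1 : θ < 1) (hq0 : 0 < q0)
    (h2 : θ * q0 < 2) (hsum : θ / 2 + (1 - θ) / 6 = 1 / q0) :
    (∫⁻ x, g x ^ q0 ∂μ) ^ (1 / q0) ≤
      ((∫⁻ x, g x ^ (2 : ℝ) ∂μ) ^ ((1 : ℝ) / 2)) ^ θ *
        ((∫⁻ x, g x ^ (6 : ℝ) ∂μ) ^ ((1 : ℝ) / 6)) ^ (1 - θ) := by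
  have hθq : 0 < θ * q0 := mul_pos hθ0 hq0
  have hθq' : 0 < (1 - θ) * q0 := mul_pos (by linarith) hq0
  set a : ℝ := 2 / (θ * q0) with ha
  set b : ℝ := 6 / ((1 - θ) * q0) with hb
  have ha1 : 1 < a := by rw [ha, lt_div_iff₀ hθq]; linarith
  have hbpos : 0 < b := div_pos (by norm_num) hθq'
  have hconj : a.HolderConjugate b := by
    rw [Real.holderConjugate_iff]
    constructor
    · exact ha1
    · rw [ha, hb]
      rw [inv_div, inv_div]
      rw [div_add_div _ _ (by norm_num : (2:ℝ) ≠ 0) (by norm_num : (6:ℝ) ≠ 0)]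
      rw [div_eq_one_iff_eq (by norm_num : (2:ℝ)*6 ≠ 0)]
      have := hsum
      field_simp at this
      nlinarith [this]
  have key := ENNReal.lintegral_mul_le_Lp_mul_Lq μ hconj
    (hg.pow_const (θ * q0)) (hg.pow_const ((1 - θ) * q0))
  have h1 : ∀ x, g x ^ (θ * q0) * g x ^ ((1 - θ) * q0) = g x ^ q0 := by
    intro x
    rw [← ENNReal.rpow_add_of_nonneg _ _ hθq.le hθq'.le]
    ring_nf
  have h2a : ∀ x, (g x ^ (θ * q0)) ^ a = g x ^ (2 : ℝ) := by
    intro x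
    rw [← ENNReal.rpow_mul, ha]
    congr 1
    field_simp
  have h2b : ∀ x, (g x ^ ((1 - θ) * q0)) ^ b = g x ^ (6 : ℝ) := by
    intro x
    rw [← ENNReal.rpow_mul, hb]
    congr 1
    field_simp
    exact div_self (ne_of_gt (by linarith))
  simp only [Pi.mul_apply, h1, h2a, h2b] at key
  have := ENNReal.rpow_le_rpow key (by positivity : (0:ℝ) ≤ 1 / q0)
  refine this.trans_eq ?_
  rw [ENNReal.mul_rpow_of_nonneg _ _ (by positivity : (0:ℝ) ≤ 1 / q0)]
  rw [← ENNReal.rpow_mul, ← ENNReal.rpow_mul, ← ENNReal.rpow_mul, ← ENNReal.rpow_mul]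
  congr 1 <;> congr 1
  · rw [ha]; field_simp
  · rw [hb]; field_simp

/-- Lemma 9 (weak_estimates), interpolation step: a function in
`L^∞(0,T;L²(Ω)) ∩ L²(0,T;L⁶(Ω))` lies in `L^{p'}(0,T;L^{q'}(Ω))` for all
`p' ∈ (2,∞)`, `q' ∈ (2,6)` with `3/q' + 2/p' = 3/2`, with mixed norm bounded by
the sum of the two norms. -/
theorem mixed_interpolation_Linfty_L2
    (Ω : Set (EuclideanSpace ℝ (Fin 3))) (hΩ : MeasurableSet Ω)
    (T p' q' : ℝ) (hT : 0 < T)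
    (hp' : 2 < p') (hq'₁ : 2 < q') (hq'₂ : q' < 6)
    (hpq : 3 / q' + 2 / p' = 3 / 2)
    (u : ℝ → EuclideanSpace ℝ (Fin 3) → EuclideanSpace ℝ (Fin 3))
    (hmeas : Measurable (Function.uncurry u))
    (Minf M6 : ℝ≥0∞)
    (hMinf : Minf = essSup (fun t => eLpNorm (u t) 2 (volume.restrict Ω))
      (volume.restrict (Set.Ioo 0 T)))
    (hM6 : M6 = (∫⁻ t in Set.Ioo 0 T,
        eLpNorm (u t) 6 (volume.restrict Ω) ^ (2 : ℝ)) ^ ((1 : ℝ) / 2))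
    (hMinf_fin : Minf < ⊤) (hM6_fin : M6 < ⊤) :
    (∫⁻ t in Set.Ioo 0 T,
        eLpNorm (u t) (ENNReal.ofReal q') (volume.restrict Ω) ^ p') ^ (1 / p')
      ≤ Minf + M6 := by
  have hp'pos : (0:ℝ) < p' := by linarith
  have hq'pos : (0:ℝ) < q' := by linarith
  set θ : ℝ := 1 - 2 / p' with hθdef
  have h2p' : 0 < 2 / p' := by positivity
  have h2p'1 : 2 / p' < 1 := by rw [div_lt_one hp'pos]; linarith
  have hθ0 : 0 < θ := by simp only [hθdef]; linarith
  have hθ1 : θ < 1 := by simp only [hθdef]; linarith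
  have hθeq : θ = 3 / q' - 1 / 2 := by simp only [hθdef]; linarith
  have h3q : 3 / q' * q' = 3 := div_mul_cancel₀ 3 (ne_of_gt hq'pos)
  have h2 : θ * q' < 2 := by
    rw [hθeq, sub_mul, h3q]; linarith
  have hsum : θ / 2 + (1 - θ) / 6 = 1 / q' := by
    rw [hθeq]; field_simp; ring
  set μΩ := volume.restrict Ω with hμΩ
  have hpt : ∀ t, eLpNorm (u t) (ENNReal.ofReal q') μΩ ≤
      (eLpNorm (u t) 2 μΩ) ^ θ * (eLpNorm (u t) 6 μΩ) ^ (1 - θ) := by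
    intro t
    have hg : AEMeasurable (fun x => (‖u t x‖₊ : ℝ≥0∞)) μΩ :=
      (hmeas.of_uncurry_left).enorm.aemeasurable
    have h := lintegral_interp μΩ _ hg hθ0 hθ1 hq'pos h2 hsum
    rw [eLpNorm_eq_lintegral_rpow_enorm_toReal (by simp [hq'pos]) (by simp),
        eLpNorm_eq_lintegral_rpow_enorm_toReal (by norm_num) (by norm_num),
        eLpNorm_eq_lintegral_rpow_enorm_toReal (by norm_num) (by norm_num)]
    simpa [ENNReal.toReal_ofReal hq'pos.le, enorm_eq_nnnorm] using h
  have hA : ∀ᵐ t ∂(volume.restrict (Set.Ioo 0 T)), eLpNorm (u t) 2 μΩ ≤ Minf :=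
    hMinf ▸ ENNReal.ae_le_essSup _
  have hMθ : Minf ^ (θ * p') ≠ ⊤ :=
    (ENNReal.rpow_lt_top_of_nonneg (by positivity) hMinf_fin.ne).ne
  have h1θ : (1 - θ) * p' = 2 := by
    simp only [hθdef, _root_.sub_sub_cancel]
    field_simp
  calc (∫⁻ t in Set.Ioo 0 T, eLpNorm (u t) (ENNReal.ofReal q') μΩ ^ p') ^ (1 / p')
      ≤ (∫⁻ t in Set.Ioo 0 T, Minf ^ (θ * p') * eLpNorm (u t) 6 μΩ ^ (2:ℝ)) ^ (1 / p') := by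
        apply ENNReal.rpow_le_rpow _ (by positivity)
        apply lintegral_mono_ae
        filter_upwards [hA] with t ht
        calc eLpNorm (u t) (ENNReal.ofReal q') μΩ ^ p'
            ≤ ((eLpNorm (u t) 2 μΩ) ^ θ * (eLpNorm (u t) 6 μΩ) ^ (1 - θ)) ^ p' :=
              ENNReal.rpow_le_rpow (hpt t) hp'pos.le
          _ = (eLpNorm (u t) 2 μΩ) ^ (θ * p') * (eLpNorm (u t) 6 μΩ) ^ ((1 - θ) * p') := by
              rw [ENNReal.mul_rpow_of_nonneg _ _ hp'pos.le, ← ENNReal.rpow_mul,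
                ← ENNReal.rpow_mul]
          _ ≤ Minf ^ (θ * p') * eLpNorm (u t) 6 μΩ ^ (2:ℝ) := by
              rw [h1θ]
              exact mul_le_mul_left (ENNReal.rpow_le_rpow ht (by positivity)) _
    _ = (Minf ^ (θ * p') * M6 ^ (2:ℝ)) ^ (1 / p') := by
        rw [lintegral_const_mul' _ _ hMθ, hM6, ← ENNReal.rpow_mul]
        norm_num
    _ = Minf ^ θ * M6 ^ (2 / p') := by
        rw [ENNReal.mul_rpow_of_nonneg _ _ (by positivity : (0:ℝ) ≤ 1 / p'),
          ← ENNReal.rpow_mul, ← ENNReal.rpow_mul]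
        congr 1
        · congr 1; field_simp
        · congr 1; field_simp
    _ ≤ (Minf + M6) ^ θ * (Minf + M6) ^ (1 - θ) := by
        have h2pθ : 2 / p' = 1 - θ := by simp only [hθdef]; ring
        rw [h2pθ]
        exact mul_le_mul' (ENNReal.rpow_le_rpow le_self_add hθ0.le)
          (ENNReal.rpow_le_rpow le_add_self (by linarith))
    _ = Minf + M6 := by
        rw [← ENNReal.rpow_add_of_nonneg _ _ hθ0.le (by linarith)]
        simp
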